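/- Let (R, m) be a Noetherian local ring. The ideal Z(m) of polynomials vanishing on m contains a nonzero polynomial if and only if depth R = 0 (equivalently, every element of m is a zero divisor). -/

import Mathlib

open Polynomial IsLocalRing

/-- The ideal of polynomials in `R[X]` mapping every element of `S` into the ideal `I`. -/
def zeroFunctionsInto {R : Type*} [CommRing R] (S : Set R) (I : Ideal R) : Ideal R[X] where
  carrier := {f | ∀ s ∈ S, f.eval s ∈ I}
  add_mem' := fun hf hg s hs => by simpa using I.add_mem (hf s hs) (hg s hs)
  zero_mem' := fun s _ => by simp
  smul_mem' := fun c f hf s hs => by simpa using I.mul_mem_left (c.eval s) (hf s hs)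

/-- The ideal of polynomials vanishing on the subset `S`. -/
def zeroFunctions {R : Type*} [CommRing R] (S : Set R) : Ideal R[X] :=
  zeroFunctionsInto S ⊥

/-- If a polynomial vanishes on all positive powers of a regular element of the maximal
ideal of a Noetherian local ring, it is zero. -/
lemma vanish_on_pows_eq_zero {R : Type*} [CommRing R] [IsNoetherianRing R] [IsLocalRing R]
    {a : R} (ha : a ∈ maximalIdeal R) (hreg : a ∈ nonZeroDivisors R) :
    ∀ (n : ℕ) (f : R[X]), f.natDegree ≤ n → (∀ k : ℕ, f.eval (a ^ (k + 1)) = 0) → f = 0 := by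
  have key : ∀ f : R[X], (∀ k : ℕ, f.eval (a ^ (k + 1)) = 0) → f.coeff 0 = 0 := by
    intro f hf
    have hmem : f.coeff 0 ∈ ⨅ k : ℕ, maximalIdeal R ^ k := by
      rw [Submodule.mem_iInf]
      intro k
      have h1 : f.divX.eval (a ^ (k + 1)) * a ^ (k + 1) + f.coeff 0 = 0 := by
        have h := hf k
        conv_lhs at h => rw [← f.divX_mul_X_add]
        simpa using h
      have h2 : f.coeff 0 = -(f.divX.eval (a ^ (k + 1)) * a ^ (k + 1)) :=
        eq_neg_of_add_eq_zero_right h1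
      rw [h2]
      refine neg_mem (Ideal.mul_mem_left _ _ ?_)
      exact Ideal.pow_le_pow_right (Nat.le_succ k) (Ideal.pow_mem_pow ha (k + 1))
    rwa [Ideal.iInf_pow_eq_bot_of_isLocalRing _
      (Ideal.IsMaximal.ne_top (maximalIdeal.isMaximal R)), Ideal.mem_bot] at hmem
  intro n
  induction n with
  | zero =>
    intro f hdeg hf
    rw [Polynomial.eq_C_of_natDegree_le_zero hdeg, key f hf, map_zero]
  | succ n ih =>
    intro f hdeg hf
    have h0 := key f hf
    have hdiv : f.divX = 0 := by
      refine ih _ ?_ ?_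
      · have := f.natDegree_divX_eq_natDegree_tsub_one
        omega
      · intro k
        have h := hf k
        conv_lhs at h => rw [← f.divX_mul_X_add]
        rw [h0] at h
        simp only [eval_add, eval_mul, eval_X, map_zero, add_zero] at h
        exact (mem_nonZeroDivisors_iff.mp (pow_mem hreg (k + 1))).2 _ h
    rw [← f.divX_mul_X_add, hdiv, h0]
    simp

/-- If `c ≠ 0` is killed by `I ^ k`, then some nonzero element is killed by `I`. -/
lemma exists_ann_of_pow_ann {R : Type*} [CommRing R] (I : Ideal R) {c : R} (hc : c ≠ 0) :
    ∀ k : ℕ, (∀ x ∈ I ^ k, x * c = 0) → ∃ d : R, d ≠ 0 ∧ ∀ a ∈ I, a * d = 0 := by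
  intro k
  induction k with
  | zero =>
    intro h
    exact absurd (by simpa using h 1 (by simp)) hc
  | succ k ih =>
    intro h
    by_cases h' : ∀ x ∈ I ^ k, x * c = 0
    · exact ih h'
    · push_neg at h'
      obtain ⟨x, hx, hxc⟩ := h'
      refine ⟨x * c, hxc, fun b hb => ?_⟩
      have hmem : x * b ∈ I ^ (k + 1) := by
        rw [pow_succ]
        exact Ideal.mul_mem_mul hx hb
      calc b * (x * c) = (x * b) * c := by ring
        _ = 0 := h _ hmem

theorem statement_10 {R : Type*} [CommRing R] [IsNoetherianRing R] [IsLocalRing R] :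
    (∃ f : R[X], f ≠ 0 ∧ f ∈ zeroFunctions (maximalIdeal R : Set R)) ↔
      ∀ a ∈ maximalIdeal R, a ∉ nonZeroDivisors R := by
  constructor
  · rintro ⟨f, hf0, hf⟩ a ha hreg
    refine hf0 (vanish_on_pows_eq_zero ha hreg f.natDegree f le_rfl fun k => ?_)
    have hk : a ^ (k + 1) ∈ maximalIdeal R := by
      rw [pow_succ]; exact Ideal.mul_mem_left _ _ ha
    have := hf _ hk
    rwa [Ideal.mem_bot] at this
  · intro h
    classical
    obtain ⟨t, ht_inf, ht_primary, -, ht_min⟩ := Ideal.IsLasker.minimal (Ideal.isLasker R R) ⊥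
    -- the maximal ideal is contained in the union of the radicals
    have hsub : (maximalIdeal R : Set R) ⊆
        ⋃ Q ∈ (t : Set (Ideal R)), (Ideal.radical Q : Set R) := by
      intro a ha
      obtain ⟨b, hb, hb0⟩ := notMem_nonZeroDivisors_iff_right.mp (h a ha)
      have hbQ : ∃ Q ∈ t, b ∉ Q := by
        by_contra hc
        push_neg at hc
        have : b ∈ t.inf id := Submodule.mem_finsetInf.mpr hc
        rw [ht_inf] at this
        exact hb0 (by simpa using this)
      obtain ⟨Q, hQ, hbQ'⟩ := hbQ
      have hprim : ∀ {x y : R}, x * y ∈ Q → x ∈ Q ∨ y ∈ Ideal.radical Q :=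
        (Ideal.isPrimary_iff.mp (ht_primary hQ)).2
      have : b ∈ Q ∨ a ∈ Ideal.radical Q := hprim (by rw [hb]; exact Q.zero_mem)
      exact Set.mem_biUnion hQ (this.resolve_left hbQ')
    have havoid : ∃ Q ∈ t, maximalIdeal R ≤ Ideal.radical Q :=
      (Ideal.subset_union_prime ⊥ ⊥ fun Q hQ _ _ => Ideal.isPrime_radical (ht_primary hQ)).mp hsub
    obtain ⟨Q, hQ, hmQ⟩ := havoid
    obtain ⟨k, hk⟩ := Ideal.exists_pow_le_of_le_radical_of_fg hmQ
      (IsNoetherian.noetherian (maximalIdeal R))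
    obtain ⟨c, hc_mem, hc_not⟩ := SetLike.not_le_iff_exists.mp (ht_min hQ)
    have hc0 : c ≠ 0 := fun hc => hc_not (hc ▸ Q.zero_mem)
    have hkill : ∀ x ∈ (maximalIdeal R) ^ k, x * c = 0 := by
      intro x hx
      have : x * c ∈ t.inf id := by
        rw [Submodule.mem_finsetInf]
        intro J hJ
        by_cases hJQ : J = Q
        · subst hJQ
          exact Ideal.mul_mem_right _ _ (hk hx)
        · have hcJ : c ∈ (t.erase Q).inf id :=hc_mem
          have : c ∈ J := Submodule.mem_finsetInf.mp hcJ J (Finset.mem_erase.mpr ⟨hJQ, hJ⟩)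
          exact Ideal.mul_mem_left _ _ this
      rw [ht_inf] at this
      simpa using this
    obtain ⟨d, hd0, hd⟩ := exists_ann_of_pow_ann (maximalIdeal R) hc0 k hkill
    refine ⟨C d * X, fun hCd => hd0 ?_, fun s hs => ?_⟩
    · simpa using congrArg (fun p => Polynomial.coeff p 1) hCd
    · show (C d * X).eval s ∈ (⊥ : Ideal R)
      simp only [eval_mul, eval_C, eval_X, Ideal.mem_bot]
      rw [mul_comm]
      exact hd s hs
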